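/- Let m > 0. Then the spectral density ρ satisfies: (i) ρ(M) ≥ 0 for all M; (ii) ρ is square-integrable on [4m², ∞); and (iii) ρ is Hölder continuous of exponent 1/2 on [4m², ∞): there exists C ≥ 0 such that |ρ(M) − ρ(M′)| ≤ C·|M − M′|^{1/2} for all M, M′ ≥ 4m². -/

import Mathlib

open MeasureTheory Set Real

/-- The spectral density `ρ(M) = (1/(16π²M))·√(1 − 4m²/M)` for `M ≥ 4m²`, and `0` otherwise. -/
noncomputable def rho (m M : ℝ) : ℝ :=
  if 4 * m ^ 2 ≤ M then (1 / (16 * Real.pi ^ 2 * M)) * Real.sqrt (1 - 4 * m ^ 2 / M) else 0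

/-- The square root is ½-Hölder with constant 1. -/
lemma abs_sqrt_sub_sqrt_le (a b : ℝ) : |Real.sqrt a - Real.sqrt b| ≤ Real.sqrt |a - b| := by
  wlog h : b ≤ a with H
  · rw [abs_sub_comm, abs_sub_comm a b]; exact H b a (le_of_not_ge h)
  rcases le_or_gt b 0 with hb | hb
  · rw [Real.sqrt_eq_zero_of_nonpos hb, sub_zero,
      abs_of_nonneg (Real.sqrt_nonneg a)]
    apply Real.sqrt_le_sqrt
    rcases le_or_gt a 0 with ha | ha
    · have : a - b ≤ 0 ∨ 0 ≤ a - b := le_or_gt (a - b) 0 |>.imp id le_of_lt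
      rcases abs_cases (a - b) with ⟨h1, _⟩ | ⟨h1, _⟩ <;> linarith
    · rcases abs_cases (a - b) with ⟨h1, _⟩ | ⟨h1, _⟩ <;> linarith
  · have hab : 0 ≤ a - b := by linarith
    rw [abs_of_nonneg hab, abs_of_nonneg (sub_nonneg.mpr (Real.sqrt_le_sqrt h))]
    rw [sub_le_iff_le_add]
    apply Real.sqrt_le_iff.mpr
    refine ⟨by positivity, ?_⟩
    have h1 := Real.sq_sqrt hab
    have h2 := Real.sq_sqrt hb.le
    have h3 := Real.sqrt_nonneg (a - b)
    have h4 := Real.sqrt_nonneg b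
    nlinarith

lemma measurable_rho (m : ℝ) : Measurable (rho m) := by
  unfold rho
  apply Measurable.ite (measurableSet_le measurable_const measurable_id)
  · fun_prop
  · exact measurable_const

theorem stmt_17 (m : ℝ) (hm : 0 < m) :
    (∀ M : ℝ, 0 ≤ rho m M) ∧
    MemLp (rho m) 2 (volume.restrict (Set.Ici (4 * m ^ 2))) ∧
    ∃ C : ℝ, 0 ≤ C ∧ ∀ M M' : ℝ, 4 * m ^ 2 ≤ M → 4 * m ^ 2 ≤ M' →
      |rho m M - rho m M'| ≤ C * |M - M'| ^ ((1 : ℝ) / 2) := by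
  have hpi := Real.pi_pos
  have ha : (0 : ℝ) < 4 * m ^ 2 := by positivity
  -- (i) nonnegativity
  have hnn : ∀ M : ℝ, 0 ≤ rho m M := by
    intro M
    unfold rho
    split_ifs with h
    · have hM : 0 < M := lt_of_lt_of_le ha h
      have : 0 ≤ Real.sqrt (1 - 4 * m ^ 2 / M) := Real.sqrt_nonneg _
      positivity
    · exact le_refl 0
  refine ⟨hnn, ?_, ?_⟩
  -- (ii) square integrability
  · have hmeas : AEStronglyMeasurable (rho m) (volume.restrict (Ici (4 * m ^ 2))) :=
      (measurable_rho m).aestronglyMeasurable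
    refine (memLp_two_iff_integrable_sq hmeas).mpr ?_
    have hg : IntegrableOn (fun x : ℝ => (16 * Real.pi ^ 2)⁻¹ ^ 2 * x ^ (-2 : ℝ))
        (Ici (4 * m ^ 2)) := by
      have h2 : IntegrableOn (fun x : ℝ => x ^ (-2 : ℝ)) (Ici (4 * m ^ 2)) := by
        rw [integrableOn_Ici_iff_integrableOn_Ioi]
        exact integrableOn_Ioi_rpow_of_lt (by norm_num) ha
      exact h2.const_mul _
    refine Integrable.mono hg ((measurable_rho m).pow_const 2).aestronglyMeasurable ?_
    rw [ae_restrict_iff' measurableSet_Ici]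
    filter_upwards with x hx
    have hx0 : 0 < x := lt_of_lt_of_le ha hx
    have hs1 : Real.sqrt (1 - 4 * m ^ 2 / x) ≤ 1 := by
      have h0 : (0:ℝ) ≤ 4 * m ^ 2 / x := by positivity
      calc Real.sqrt (1 - 4 * m ^ 2 / x) ≤ Real.sqrt 1 :=
            Real.sqrt_le_sqrt (by linarith)
        _ = 1 := Real.sqrt_one
    have hrle : rho m x ≤ 1 / (16 * Real.pi ^ 2 * x) := by
      rw [rho, if_pos (show 4 * m ^ 2 ≤ x from hx)]
      calc 1 / (16 * Real.pi ^ 2 * x) * Real.sqrt (1 - 4 * m ^ 2 / x)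
          ≤ 1 / (16 * Real.pi ^ 2 * x) * 1 := by
            apply mul_le_mul_of_nonneg_left hs1; positivity
        _ = 1 / (16 * Real.pi ^ 2 * x) := by ring
    have hsq : rho m x ^ 2 ≤ (1 / (16 * Real.pi ^ 2 * x)) ^ 2 := by
      have := hnn x
      nlinarith
    have hrw : (16 * Real.pi ^ 2)⁻¹ ^ 2 * x ^ (-2 : ℝ)
        = (1 / (16 * Real.pi ^ 2 * x)) ^ 2 := by
      rw [Real.rpow_neg hx0.le, Real.rpow_two]
      field_simp
    rw [Real.norm_eq_abs, Real.norm_eq_abs, hrw, abs_of_nonneg (by positivity),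
      abs_of_nonneg (by positivity)]
    exact hsq
  -- (iii) Hölder continuity
  · set a : ℝ := 4 * m ^ 2 with ha_def
    set sa : ℝ := Real.sqrt a with hsa_def
    have hsa0 : 0 < sa := Real.sqrt_pos.mpr ha
    have hsa2 : sa ^ 2 = a := Real.sq_sqrt ha.le
    refine ⟨1 / (8 * Real.pi ^ 2 * a * sa), by positivity, ?_⟩
    intro M M' hM hM'
    have hM0 : 0 < M := lt_of_lt_of_le ha hM
    have hM'0 : 0 < M' := lt_of_lt_of_le ha hM'
    set x : ℝ := |M - M'| with hx_def
    have hx0 : 0 ≤ x := abs_nonneg _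
    set sx : ℝ := Real.sqrt x with hsx_def
    have hsx0 : 0 ≤ sx := Real.sqrt_nonneg _
    have hsx2 : sx ^ 2 = x := Real.sq_sqrt hx0
    have hax : a * x ≤ M * M' := by
      rcases abs_cases (M - M') with ⟨h1, _⟩ | ⟨h1, _⟩ <;>
        rw [hx_def, h1] <;> nlinarith
    have ha2 : a * a ≤ M * M' := by nlinarith
    set s : ℝ → ℝ := fun t => Real.sqrt (1 - a / t) with hs_def
    set p : ℝ → ℝ := fun t => 1 / (16 * Real.pi ^ 2 * t) with hp_def
    -- bound on the sqrt part
    have hsdiff : |s M - s M'| ≤ sx / sa := by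
      refine le_trans (abs_sqrt_sub_sqrt_le _ _) ?_
      have h1 : |(1 - a / M) - (1 - a / M')| = a * x / (M * M') := by
        rw [show (1 - a / M) - (1 - a / M') = a * (M - M') / (M * M') by
          field_simp; ring]
        rw [abs_div, abs_mul, abs_of_nonneg ha.le,
          abs_of_nonneg (by positivity : (0:ℝ) ≤ M * M'), ← hx_def]
      rw [h1]
      have h2 : a * x / (M * M') ≤ x / a := by
        rw [div_le_div_iff₀ (by positivity) ha]
        nlinarith
      calc Real.sqrt (a * x / (M * M')) ≤ Real.sqrt (x / a) := Real.sqrt_le_sqrt h2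
        _ = sx / sa := Real.sqrt_div hx0 a
    -- bound on the prefactor part
    have hpdiff : |p M - p M'| ≤ sx / (16 * Real.pi ^ 2 * a * sa) := by
      have h1 : |p M - p M'| = x / (16 * Real.pi ^ 2 * (M * M')) := by
        rw [hp_def]
        simp only
        rw [show 1 / (16 * Real.pi ^ 2 * M) - 1 / (16 * Real.pi ^ 2 * M')
            = (M' - M) / (16 * Real.pi ^ 2 * (M * M')) by field_simp]
        rw [abs_div, abs_of_nonneg (by positivity : (0:ℝ) ≤ 16 * Real.pi ^ 2 * (M * M')),
          abs_sub_comm, ← hx_def]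
      rw [h1]
      have hu : sx * (sa * a) ≤ M * M' := by
        have hmm : (a * x) * (a * a) ≤ (M * M') * (M * M') :=
          mul_le_mul hax ha2 (by positivity) (by positivity)
        have husq : (sx * (sa * a)) ^ 2 ≤ (M * M') ^ 2 := by
          calc (sx * (sa * a)) ^ 2 = (a * x) * (a * a) := by
                rw [mul_pow, mul_pow, hsx2, hsa2]; ring
            _ ≤ (M * M') * (M * M') := hmm
            _ = (M * M') ^ 2 := (sq (M * M')).symm
        nlinarith [mul_pos hM0 hM'0]
      rw [div_le_div_iff₀ (by positivity) (by positivity)]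
      calc x * (16 * Real.pi ^ 2 * a * sa) = (16 * Real.pi ^ 2) * (sx * (sx * (sa * a))) := by
            rw [show sx * (sx * (sa * a)) = sx ^ 2 * (sa * a) by ring, hsx2]; ring
        _ ≤ (16 * Real.pi ^ 2) * (sx * (M * M')) := by
            apply mul_le_mul_of_nonneg_left _ (by positivity)
            exact mul_le_mul_of_nonneg_left hu hsx0
        _ = sx * (16 * Real.pi ^ 2 * (M * M')) := by ring
    have hsM' : |s M'| ≤ 1 := by
      rw [abs_of_nonneg (Real.sqrt_nonneg _)]
      have h0 : (0:ℝ) ≤ a / M' := by positivity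
      calc Real.sqrt (1 - a / M') ≤ Real.sqrt 1 := Real.sqrt_le_sqrt (by linarith)
        _ = 1 := Real.sqrt_one
    have hpM : |p M| ≤ 1 / (16 * Real.pi ^ 2 * a) := by
      rw [abs_of_nonneg (by positivity : (0:ℝ) ≤ 1 / (16 * Real.pi ^ 2 * M))]
      apply one_div_le_one_div_of_le (by positivity)
      nlinarith
    have hrho : rho m M - rho m M' = p M * (s M - s M') + (p M - p M') * s M' := by
      rw [rho, rho, if_pos hM, if_pos hM']
      simp only [hp_def, hs_def, ← ha_def]
      ring
    rw [hrho]
    calc |p M * (s M - s M') + (p M - p M') * s M'|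
        ≤ |p M * (s M - s M')| + |(p M - p M') * s M'| := abs_add_le _ _
      _ = |p M| * |s M - s M'| + |p M - p M'| * |s M'| := by rw [abs_mul, abs_mul]
      _ ≤ (1 / (16 * Real.pi ^ 2 * a)) * (sx / sa)
          + (sx / (16 * Real.pi ^ 2 * a * sa)) * 1 :=
          add_le_add (mul_le_mul hpM hsdiff (abs_nonneg _) (by positivity))
            (mul_le_mul hpdiff hsM' (abs_nonneg _) (by positivity))
      _ = (1 / (8 * Real.pi ^ 2 * a * sa)) * sx := by
          have hden : (0:ℝ) < 16 * Real.pi ^ 2 * a * sa :=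
            mul_pos (mul_pos (mul_pos (by norm_num) (pow_pos hpi 2)) ha) hsa0
          have hden8 : (0:ℝ) < 8 * Real.pi ^ 2 * a * sa :=
            mul_pos (mul_pos (mul_pos (by norm_num) (pow_pos hpi 2)) ha) hsa0
          rw [div_mul_div_comm, one_mul, mul_one, one_div_mul_eq_div,
            ← add_div, div_eq_div_iff hden.ne' hden8.ne']
          ring
      _ = 1 / (8 * Real.pi ^ 2 * a * sa) * |M - M'| ^ ((1 : ℝ) / 2) := by
          rw [hsx_def, hx_def, Real.sqrt_eq_rpow]
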